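/- If ε ≤ L_{W,Θ}, then the aggregated mixing inequality derived from Θ implies the linking constraint y_1 + ⋯ + y_k ≥ ε on the box 0 ≤ z ≤ 1. More precisely, for any (y,z) ∈ ℝ^k × [0,1]^n satisfying the aggregated mixing inequality Σ_{j∈[k]} (y_j + Σ_{s∈[τ_j]} (w_{j_s,j} − w_{j_{s+1},j}) z_{j_s}) − ε z_{i_θ} ≥ Σ_{j∈[k]} max{w_{i,j} : i∈Θ}, one has Σ_{j∈[k]} y_j ≥ ε. -/

import Mathlib

/-- `max{w_{i} : position t precedes i in Θ}`, with the convention that the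
max over the empty set is `0`. -/
def laterMax {n θ : ℕ} (wj : Fin n → ℝ) (Θ : Fin (θ + 1) → Fin n) (t : Fin (θ + 1)) : ℝ :=
  (Finset.univ.filter (fun s => t < s)).fold max 0 (fun s => wj (Θ s))

/-- `L_{W,Θ} = min{ min_{t<θ} Σ_j min{w_{i_t,j}, max{w_{i,j} : i_t precedes i in Θ}},
Σ_j w_{i_θ,j} }`. -/
def LWT {n k θ : ℕ} (w : Fin n → Fin k → ℝ) (Θ : Fin (θ + 1) → Fin n) : ℝ :=
  Finset.univ.inf' Finset.univ_nonempty (fun t : Fin (θ + 1) =>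
    if (t : ℕ) < θ then ∑ j, min (w (Θ t) j) (laterMax (fun i => w i j) Θ t)
    else ∑ j, w (Θ t) j)

/-- `max{w_{i,j} : i ∈ Θ}`. -/
def thetaMax {n θ : ℕ} (wj : Fin n → ℝ) (Θ : Fin (θ + 1) → Fin n) : ℝ :=
  Finset.univ.fold max 0 (fun t => wj (Θ t))

/-- The left-hand side of the aggregated mixing inequality derived from `Θ`, written
(equivalently, via the identity `(coeff-transf)`) with coefficient
`(w_{i_t,j} − max{w_{i,j} : i_t precedes i in Θ})_+` on `z_{i_t}`:
`Σ_j (y_j + Σ_{s∈[τ_j]} (w_{j_s,j} − w_{j_{s+1},j}) z_{j_s}) − min{ε, L_{W,Θ}} z_{i_θ}`. -/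
def aggLHS {n k θ : ℕ} (w : Fin n → Fin k → ℝ) (ε : ℝ) (Θ : Fin (θ + 1) → Fin n)
    (y : Fin k → ℝ) (z : Fin n → ℝ) : ℝ :=
  (∑ j, (y j + ∑ t : Fin (θ + 1),
      max (w (Θ t) j - laterMax (fun i => w i j) Θ t) 0 * z (Θ t)))
    - min ε (LWT w Θ) * z (Θ (Fin.last θ))

lemma max_sub_zero' (a b : ℝ) : max (a - b) 0 = max a b - b := by
  rcases le_total a b with h | h
  · simp [max_eq_right, sub_nonpos.mpr h, max_eq_right h]
  · rw [max_eq_left (by linarith), max_eq_left h]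

lemma laterMax_last {n θ : ℕ} (wj : Fin n → ℝ) (Θ : Fin (θ + 1) → Fin n) :
    laterMax wj Θ (Fin.last θ) = 0 := by
  unfold laterMax
  have : (Finset.univ.filter (fun s : Fin (θ+1) => Fin.last θ < s)) = ∅ := by
    refine Finset.filter_eq_empty_iff.mpr ?_
    intro s _
    have := s.isLt
    simp only [Fin.lt_def, Fin.val_last]
    omega
  rw [this, Finset.fold_empty]

lemma sum_pos_eq {n θ : ℕ} (wj : Fin n → ℝ) (Θ : Fin (θ + 1) → Fin n) :
    ∑ t : Fin (θ+1), max (wj (Θ t) - laterMax wj Θ t) 0 = thetaMax wj Θ := by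
  set f : ℕ → ℝ := fun i =>
    (Finset.univ.filter (fun s : Fin (θ+1) => i ≤ (s:ℕ))).fold max 0 (fun s => wj (Θ s)) with hf
  have hlater : ∀ t : Fin (θ+1), laterMax wj Θ t = f ((t:ℕ)+1) := by
    intro t
    unfold laterMax
    rw [hf]
    congr 1
  have hstep : ∀ t : Fin (θ+1), f (t:ℕ) = max (wj (Θ t)) (f ((t:ℕ)+1)) := by
    intro t
    have hins : (Finset.univ.filter (fun s : Fin (θ+1) => (t:ℕ) ≤ (s:ℕ)))
        = insert t (Finset.univ.filter (fun s : Fin (θ+1) => (t:ℕ)+1 ≤ (s:ℕ))) := by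
      ext s
      simp only [Finset.mem_filter, Finset.mem_insert, Finset.mem_univ, true_and]
      constructor
      · intro h
        by_cases h' : (t:ℕ)+1 ≤ (s:ℕ)
        · exact Or.inr h'
        · exact Or.inl (Fin.val_injective (by omega))
      · rintro (rfl | h)
        · exact le_refl _
        · omega
    have hnm : t ∉ (Finset.univ.filter (fun s : Fin (θ+1) => (t:ℕ)+1 ≤ (s:ℕ))) := by
      simp
    rw [hf]
    simp only
    rw [hins, Finset.fold_insert hnm]
  calc ∑ t : Fin (θ+1), max (wj (Θ t) - laterMax wj Θ t) 0
      = ∑ t : Fin (θ+1), (f (t:ℕ) - f ((t:ℕ)+1)) := by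
        refine Finset.sum_congr rfl fun t _ => ?_
        rw [hlater, max_sub_zero', ← hstep]
    _ = ∑ i ∈ Finset.range (θ+1), (f i - f (i+1)) :=
        Fin.sum_univ_eq_sum_range (fun i => f i - f (i+1)) (θ+1)
    _ = f 0 - f (θ+1) := Finset.sum_range_sub' f (θ+1)
    _ = thetaMax wj Θ := by
        have h1 : f (θ+1) = 0 := by
          rw [hf]
          simp only
          have : (Finset.univ.filter (fun s : Fin (θ+1) => θ+1 ≤ (s:ℕ))) = ∅ := by
            refine Finset.filter_eq_empty_iff.mpr ?_
            intro s _
            have := s.isLt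
            omega
          rw [this, Finset.fold_empty]
        have h0 : f 0 = thetaMax wj Θ := by
          rw [hf]
          simp only
          unfold thetaMax
          congr 1
          exact Finset.filter_true_of_mem (fun s _ => Nat.zero_le _)
        rw [h0, h1, sub_zero]

/-- If `ε ≤ L_{W,Θ}`, then on the box `0 ≤ z ≤ 1` the aggregated mixing inequality derived
from `Θ` (whose `z_{i_θ}` coefficient is then `−ε`) implies the linking constraint
`Σ_j y_j ≥ ε`. -/
theorem stmt_8 (n k θ : ℕ) (w : Fin n → Fin k → ℝ) (ε : ℝ)
    (hw : ∀ i j, 0 ≤ w i j) (hε : 0 ≤ ε)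
    (Θ : Fin (θ + 1) → Fin n) (hΘ : Function.Injective Θ)
    (hLW : ε ≤ LWT w Θ)
    (y : Fin k → ℝ) (z : Fin n → ℝ)
    (hz0 : ∀ i, 0 ≤ z i) (hz1 : ∀ i, z i ≤ 1)
    (hagg : (∑ j, (y j + ∑ t : Fin (θ + 1),
          max (w (Θ t) j - laterMax (fun i => w i j) Θ t) 0 * z (Θ t)))
        - ε * z (Θ (Fin.last θ)) ≥ ∑ j, thetaMax (fun i => w i j) Θ) :
    ∑ j, y j ≥ ε := by
  have hzθ0 := hz0 (Θ (Fin.last θ))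
  have hzθ1 := hz1 (Θ (Fin.last θ))
  have hεw : ε ≤ ∑ j, w (Θ (Fin.last θ)) j := by
    refine hLW.trans ?_
    have h := Finset.inf'_le (f := fun t : Fin (θ + 1) =>
      if (t : ℕ) < θ then ∑ j, min (w (Θ t) j) (laterMax (fun i => w i j) Θ t)
      else ∑ j, w (Θ t) j) (b := Fin.last θ) (Finset.mem_univ _)
    refine h.trans (le_of_eq ?_)
    simp [Fin.val_last]
  have key : ∀ j, ∑ t : Fin (θ+1), max (w (Θ t) j - laterMax (fun i => w i j) Θ t) 0 * z (Θ t)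
      ≤ thetaMax (fun i => w i j) Θ - w (Θ (Fin.last θ)) j * (1 - z (Θ (Fin.last θ))) := by
    intro j
    have hsum := sum_pos_eq (fun i => w i j) Θ
    have hclast : max (w (Θ (Fin.last θ)) j - laterMax (fun i => w i j) Θ (Fin.last θ)) 0
        = w (Θ (Fin.last θ)) j := by
      rw [laterMax_last, sub_zero, max_eq_left (hw _ _)]
    rw [← Finset.add_sum_erase _ _ (Finset.mem_univ (Fin.last θ))]
    rw [← Finset.add_sum_erase _ _ (Finset.mem_univ (Fin.last θ))] at hsum
    have hrest : ∑ t ∈ Finset.univ.erase (Fin.last θ),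
        max (w (Θ t) j - laterMax (fun i => w i j) Θ t) 0 * z (Θ t)
        ≤ ∑ t ∈ Finset.univ.erase (Fin.last θ),
        max (w (Θ t) j - laterMax (fun i => w i j) Θ t) 0 := by
      refine Finset.sum_le_sum fun t _ => ?_
      have h0 : (0:ℝ) ≤ max (w (Θ t) j - laterMax (fun i => w i j) Θ t) 0 := le_max_right _ _
      calc max (w (Θ t) j - laterMax (fun i => w i j) Θ t) 0 * z (Θ t)
          ≤ max (w (Θ t) j - laterMax (fun i => w i j) Θ t) 0 * 1 :=
            mul_le_mul_of_nonneg_left (hz1 _) h0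
        _ = _ := mul_one _
    rw [hclast] at hsum ⊢
    linarith [hrest]
  have htot : ∑ j, ∑ t : Fin (θ+1),
      max (w (Θ t) j - laterMax (fun i => w i j) Θ t) 0 * z (Θ t)
      ≤ (∑ j, thetaMax (fun i => w i j) Θ)
        - (∑ j, w (Θ (Fin.last θ)) j) * (1 - z (Θ (Fin.last θ))) := by
    have := Finset.sum_le_sum (fun j (_ : j ∈ Finset.univ) => key j)
    rw [Finset.sum_sub_distrib, ← Finset.sum_mul] at this
    exact this
  have hmul : ε * (1 - z (Θ (Fin.last θ))) ≤ (∑ j, w (Θ (Fin.last θ)) j) * (1 - z (Θ (Fin.last θ))) :=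
    mul_le_mul_of_nonneg_right hεw (by linarith)
  rw [Finset.sum_add_distrib] at hagg
  nlinarith [htot, hmul]
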